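/- Let (Q, S, μ) be a fuzzy skill function and (Q, 𝒦) the delineated knowledge structure. Then (Q, 𝒦) is discriminative if and only if μ(q) ≠ μ(r) for any two distinct items q, r ∈ Q. -/
import Mathlib


/-- A fuzzy set on a set `S` of skills: a function `S → [0,1]`, ordered pointwise. -/
abbrev FuzzySet (S : Type*) := S → unitInterval

/-- The problem function induced by a fuzzy skill multimap `μ`:
`p(F) = {q | ∃ C ∈ μ(q), C ⊆ F}`. -/
def pfun {Q S : Type*} (μ : Q → Set (FuzzySet S)) (F : FuzzySet S) : Set Q :=
  {q | ∃ C ∈ μ q, C ≤ F}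

/-- The knowledge structure delineated by a fuzzy skill multimap `μ`. -/
def delineated {Q S : Type*} (μ : Q → Set (FuzzySet S)) : Set (Set Q) :=
  Set.range (pfun μ)

/-- `𝒦_q = {K ∈ 𝒦 | q ∈ K}`. -/
def Kq {Q : Type*} (𝒦 : Set (Set Q)) (q : Q) : Set (Set Q) := {K ∈ 𝒦 | q ∈ K}

/-- A knowledge structure is discriminative if `𝒦_q ≠ 𝒦_r` for distinct `q, r`. -/
def Discriminative {Q : Type*} (𝒦 : Set (Set Q)) : Prop :=
  ∀ q r : Q, q ≠ r → Kq 𝒦 q ≠ Kq 𝒦 r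

/-- A knowledge structure is bi-discriminative if `𝒦_q ⊄ 𝒦_r` and `𝒦_r ⊄ 𝒦_q`
for distinct `q, r`. -/
def BiDiscriminative {Q : Type*} (𝒦 : Set (Set Q)) : Prop :=
  ∀ q r : Q, q ≠ r → ¬ Kq 𝒦 q ⊆ Kq 𝒦 r ∧ ¬ Kq 𝒦 r ⊆ Kq 𝒦 q

/-- `μ` is a fuzzy skill multimap: each `μ(q)` is a nonempty family of nonzero fuzzy sets. -/
def FSM {Q S : Type*} (μ : Q → Set (FuzzySet S)) : Prop :=
  ∀ q, (μ q).Nonempty ∧ ∀ C ∈ μ q, C ≠ 0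

/-- A molecule: a fuzzy set with exactly one skill of nonzero membership. -/
def Molecule {S : Type*} (T : FuzzySet S) : Prop := ∃! s, T s ≠ 0

/-- A knowledge space: a knowledge structure closed under unions of arbitrary subfamilies. -/
def IsKSpace {Q : Type*} (𝒦 : Set (Set Q)) : Prop :=
  ∅ ∈ 𝒦 ∧ Set.univ ∈ 𝒦 ∧ ∀ 𝒮 ⊆ 𝒦, ⋃₀ 𝒮 ∈ 𝒦

/-- For a fuzzy skill function (elements of each `μ(q)` pairwise
incomparable), the delineated knowledge structure is discriminative iff `μ` is
injective on items, i.e. `μ(q) ≠ μ(r)` for distinct `q, r`. -/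
theorem stmt_10 {Q S : Type*} [Nonempty Q] [Nonempty S]
    (μ : Q → Set (FuzzySet S)) (hFSM : FSM μ)
    (hincomp : ∀ q, ∀ C ∈ μ q, ∀ D ∈ μ q, C ≤ D → C = D) :
    Discriminative (delineated μ) ↔ ∀ q r : Q, q ≠ r → μ q ≠ μ r := by
  constructor
  · intro hdisc q r hqr hμ
    apply hdisc q r hqr
    have hmem : ∀ F : FuzzySet S, q ∈ pfun μ F ↔ r ∈ pfun μ F := by
      intro F
      simp only [pfun, Set.mem_setOf_eq, hμ]
    ext K
    constructor
    · rintro ⟨⟨F, rfl⟩, hqK⟩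
      exact ⟨⟨F, rfl⟩, (hmem F).1 hqK⟩
    · rintro ⟨⟨F, rfl⟩, hrK⟩
      exact ⟨⟨F, rfl⟩, (hmem F).2 hrK⟩
  · intro hinj q r hqr hK
    apply hinj q r hqr
    have hmem : ∀ F : FuzzySet S, q ∈ pfun μ F ↔ r ∈ pfun μ F := by
      intro F
      have h1 : pfun μ F ∈ Kq (delineated μ) q ↔ pfun μ F ∈ Kq (delineated μ) r := by
        rw [hK]
      simpa [Kq, delineated, Set.mem_range_self] using h1
    have key : ∀ a b : Q, (∀ F : FuzzySet S, a ∈ pfun μ F ↔ b ∈ pfun μ F) →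
        μ a ⊆ μ b := by
      intro a b hab C hC
      have haC : a ∈ pfun μ C := ⟨C, hC, le_refl C⟩
      obtain ⟨D, hD, hDC⟩ := (hab C).1 haC
      have hbD : b ∈ pfun μ D := ⟨D, hD, le_refl D⟩
      obtain ⟨C', hC', hC'D⟩ := (hab D).2 hbD
      have hCC : C' = C := hincomp a C' hC' C hC (hC'D.trans hDC)
      have : D = C := le_antisymm hDC (hCC ▸ hC'D)
      exact this ▸ hD
    exact le_antisymm (key q r hmem) (key r q fun F => (hmem F).symm)
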